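/- arXiv:1609.09331 — 3 statements merged into one kernel-verified Lean document; each statement's English description precedes it below -/
import Mathlib

section
/- Let Z be a discrete-time stationary stochastic process with mean zero and autocovariance γ(τ) = E[Z(t)Z(t+τ)]. Then the expected squared DFA fluctuation in any window equals E F_t^2(s) = γ(0) G(0,s)/s + (2/s) Σ_{j=1}^{s-1} G(j,s) γ(j), where G(j,s) = Σ_{k=1}^{s-j} a_{k,k+j} is the sum of the j-th superdiagonal of A = D^T(I-Q)D. In particular the expectation does not depend on the window index t. -/
open MeasureTheory Finset Filter Matrix

noncomputable def dfaD (s : ℕ) : Matrix (Fin s) (Fin s) ℝ :=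
  fun i j => if (j : ℕ) ≤ (i : ℕ) then 1 else 0

noncomputable def dfaB (m s : ℕ) : Matrix (Fin (m+1)) (Fin s) ℝ :=
  fun k t => (((t : ℕ) + 1 : ℕ) : ℝ) ^ (k : ℕ)

noncomputable def dfaQ (m s : ℕ) : Matrix (Fin s) (Fin s) ℝ :=
  (dfaB m s)ᵀ * (dfaB m s * (dfaB m s)ᵀ)⁻¹ * dfaB m s

noncomputable def dfaA (m s : ℕ) : Matrix (Fin s) (Fin s) ℝ :=
  (dfaD s)ᵀ * (1 - dfaQ m s) * dfaD s

noncomputable def dfaG (m s j : ℕ) : ℝ :=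
  ∑ k : Fin s, ∑ l : Fin s, if (l : ℕ) = (k : ℕ) + j then dfaA m s k l else 0

lemma dfaQ_symm (m s : ℕ) : (dfaQ m s)ᵀ = dfaQ m s := by
  unfold dfaQ
  rw [Matrix.transpose_mul, Matrix.transpose_mul, Matrix.transpose_transpose,
    Matrix.transpose_nonsing_inv, Matrix.transpose_mul, Matrix.transpose_transpose,
    Matrix.mul_assoc]

lemma dfaA_symm (m s : ℕ) : (dfaA m s)ᵀ = dfaA m s := by
  unfold dfaA
  rw [Matrix.transpose_mul, Matrix.transpose_mul, Matrix.transpose_transpose,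
    Matrix.transpose_sub, Matrix.transpose_one, dfaQ_symm, Matrix.mul_assoc]

lemma dfaA_symm_apply (m s : ℕ) (k l : Fin s) : dfaA m s k l = dfaA m s l k := by
  have := congrFun (congrFun (dfaA_symm m s) l) k
  rw [Matrix.transpose_apply] at this
  exact this

theorem dfa_expectation_acvf {Ω : Type*} [MeasurableSpace Ω] (μ : Measure Ω)
    [IsProbabilityMeasure μ] (m s : ℕ) (hs : m + 1 ≤ s)
    (Z : ℕ → Ω → ℝ) (γ : ℕ → ℝ)
    (hmean : ∀ t, ∫ ω, Z t ω ∂μ = 0)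
    (hint : ∀ t u, Integrable (fun ω => Z t ω * Z u ω) μ)
    (hcov : ∀ t τ, ∫ ω, Z t ω * Z (t + τ) ω ∂μ = γ τ)
    (t : ℕ) :
    ∫ ω, (1/(s:ℝ)) * ∑ k : Fin s, ∑ j : Fin s,
        dfaA m s k j * Z (t + 1 + (k:ℕ)) ω * Z (t + 1 + (j:ℕ)) ω ∂μ
      = γ 0 * dfaG m s 0 / s
        + (2/(s:ℝ)) * ∑ j ∈ Finset.range (s - 1), dfaG m s (j+1) * γ (j+1) := by
  -- covariance of any two times
  have key : ∀ a b : ℕ, (∫ ω, Z a ω * Z b ω ∂μ) = γ (Nat.dist a b) := by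
    intro a b
    rcases le_total a b with h | h
    · rw [Nat.dist_eq_sub_of_le h]
      have hb : b = a + (b - a) := by omega
      have := hcov a (b - a)
      rw [← hb] at this
      exact this
    · rw [Nat.dist_eq_sub_of_le_right h]
      have hb : a = b + (a - b) := by omega
      have := hcov b (a - b)
      rw [← hb] at this
      rw [← this]
      simp_rw [mul_comm]
  -- integrability of each term
  have hint' : ∀ (k j : Fin s),
      Integrable (fun ω => dfaA m s k j * Z (t + 1 + (k:ℕ)) ω * Z (t + 1 + (j:ℕ)) ω) μ := by
    intro k j
    simp_rw [mul_assoc]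
    exact (hint _ _).const_mul _
  -- compute the integral of each term
  have hterm : ∀ (k j : Fin s),
      (∫ ω, dfaA m s k j * Z (t + 1 + (k:ℕ)) ω * Z (t + 1 + (j:ℕ)) ω ∂μ)
        = dfaA m s k j * γ (Nat.dist (k:ℕ) (j:ℕ)) := by
    intro k j
    simp_rw [mul_assoc]
    rw [MeasureTheory.integral_const_mul, key]
    congr 1
    rw [Nat.dist_add_add_left]
  -- pull constant and sums out of the integral
  rw [MeasureTheory.integral_const_mul]
  rw [MeasureTheory.integral_finset_sum _ (fun k _ => integrable_finset_sum _ (fun j _ => hint' k j))]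
  simp_rw [MeasureTheory.integral_finset_sum _ (fun j (_ : j ∈ Finset.univ) => hint' _ j), hterm]
  -- now a purely algebraic identity
  have hsplit : (∑ k : Fin s, ∑ l : Fin s, dfaA m s k l * γ (Nat.dist (k:ℕ) (l:ℕ)))
      = dfaG m s 0 * γ 0 + 2 * ∑ d ∈ Finset.range (s-1), dfaG m s (d+1) * γ (d+1) := by
    have h1 : ∀ k l : Fin s, dfaA m s k l * γ (Nat.dist (k:ℕ) (l:ℕ)) =
        (if (l:ℕ) = (k:ℕ) + 0 then dfaA m s k l * γ 0 else 0)
        + ((if (k:ℕ) < (l:ℕ) then dfaA m s k l * γ ((l:ℕ)-(k:ℕ)) else 0)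
        + (if (l:ℕ) < (k:ℕ) then dfaA m s k l * γ ((k:ℕ)-(l:ℕ)) else 0)) := by
      intro k l
      rcases lt_trichotomy (k:ℕ) (l:ℕ) with h | h | h
      · rw [if_neg (by omega), if_pos h, if_neg (by omega),
          Nat.dist_eq_sub_of_le h.le]; ring
      · rw [if_pos (by omega), if_neg (by omega), if_neg (by omega)]
        rw [h, Nat.dist_self]; ring
      · rw [if_neg (by omega), if_neg (by omega), if_pos h,
          Nat.dist_eq_sub_of_le_right h.le]; ring
    simp_rw [h1, Finset.sum_add_distrib]
    have hdiag : (∑ k : Fin s, ∑ l : Fin s,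
        if (l:ℕ) = (k:ℕ) + 0 then dfaA m s k l * γ 0 else 0) = dfaG m s 0 * γ 0 := by
      unfold dfaG
      rw [Finset.sum_mul]
      refine Finset.sum_congr rfl fun k _ => ?_
      rw [Finset.sum_mul]
      refine Finset.sum_congr rfl fun l _ => ?_
      split <;> simp
    -- strict-upper part equals the range sum
    have h2 : ∀ k l : Fin s, (if (k:ℕ) < (l:ℕ) then dfaA m s k l * γ ((l:ℕ)-(k:ℕ)) else 0)
        = ∑ d ∈ Finset.range (s-1), if (l:ℕ) = (k:ℕ) + (d+1) then dfaA m s k l * γ (d+1) else 0 := by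
      intro k l
      have hl := l.isLt
      by_cases h : (k:ℕ) < (l:ℕ)
      · rw [if_pos h]
        rw [Finset.sum_eq_single ((l:ℕ) - (k:ℕ) - 1)]
        · rw [if_pos (by omega)]
          congr 2
          omega
        · intro b _ hb; rw [if_neg (by omega)]
        · intro hmem
          exact absurd (Finset.mem_range.mpr (by omega)) hmem
      · rw [if_neg h]
        refine (Finset.sum_eq_zero fun d _ => ?_).symm
        rw [if_neg (by omega)]
    have hupper : (∑ k : Fin s, ∑ l : Fin s,
        if (k:ℕ) < (l:ℕ) then dfaA m s k l * γ ((l:ℕ)-(k:ℕ)) else 0)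
        = ∑ d ∈ Finset.range (s-1), dfaG m s (d+1) * γ (d+1) := by
      simp_rw [h2]
      rw [Finset.sum_congr rfl fun (k : Fin s) (_ : k ∈ (Finset.univ : Finset (Fin s))) =>
        Finset.sum_comm (s := (Finset.univ : Finset (Fin s))) (t := Finset.range (s-1))
          (f := fun l d => if (l:ℕ) = (k:ℕ) + (d+1) then dfaA m s k l * γ (d+1) else 0),
        Finset.sum_comm]
      refine Finset.sum_congr rfl fun d _ => ?_
      unfold dfaG
      rw [Finset.sum_mul]
      refine Finset.sum_congr rfl fun k _ => ?_
      rw [Finset.sum_mul]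
      refine Finset.sum_congr rfl fun l _ => ?_
      split <;> simp
    have hlower : (∑ k : Fin s, ∑ l : Fin s,
        if (l:ℕ) < (k:ℕ) then dfaA m s k l * γ ((k:ℕ)-(l:ℕ)) else 0)
        = ∑ k : Fin s, ∑ l : Fin s,
        if (k:ℕ) < (l:ℕ) then dfaA m s k l * γ ((l:ℕ)-(k:ℕ)) else 0 := by
      rw [Finset.sum_comm]
      refine Finset.sum_congr rfl fun k _ => Finset.sum_congr rfl fun l _ => ?_
      rw [dfaA_symm_apply m s l k]
    rw [hdiag, hlower, hupper]
    ring
  rw [hsplit]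
  ring
end

section
/- For DFA of order m = 1, the superdiagonal weight function is G(j,s) = (j-s-1)(j-s)(j-s+1)(3j^2 + 9js - 2s^2 + 8) / (30 s (s^2 - 1)) for 0 ≤ j ≤ s-1. -/
open MeasureTheory Finset Filter Matrix

lemma sumW (a b : ℝ) (n : ℕ) :
    ∑ k ∈ range n, ( (a - ((k:ℝ)+b))
      - ( a*(a+1)*(2*a+1)/6*(a-(k:ℝ))*(a-((k:ℝ)+b))
        - a*(a+1)/2*( (a*(a+1)-(k:ℝ)*((k:ℝ)+1))/2*(a-((k:ℝ)+b))
            + (a-(k:ℝ))*((a*(a+1)-((k:ℝ)+b)*(((k:ℝ)+b)+1))/2) )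
        + a*((a*(a+1)-(k:ℝ)*((k:ℝ)+1))/2)*((a*(a+1)-((k:ℝ)+b)*(((k:ℝ)+b)+1))/2) )
        / (a^2*(a^2-1)/12) )
    = (n:ℝ)*(a-b) - (n:ℝ)*((n:ℝ)-1)/2
      - ( (-1/45:ℝ)*(a:ℝ)*(n:ℝ)
      + (1/24:ℝ)*(a:ℝ)*(n:ℝ)^2
      + (1/18:ℝ)*(a:ℝ)*(n:ℝ)^3
      + (-1/8:ℝ)*(a:ℝ)*(n:ℝ)^4
      + (1/20:ℝ)*(a:ℝ)*(n:ℝ)^5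
      + (1/24:ℝ)*(a:ℝ)*(b:ℝ)*(n:ℝ)
      + (1/12:ℝ)*(a:ℝ)*(b:ℝ)*(n:ℝ)^2
      + (-1/4:ℝ)*(a:ℝ)*(b:ℝ)*(n:ℝ)^3
      + (1/8:ℝ)*(a:ℝ)*(b:ℝ)*(n:ℝ)^4
      + (1/24:ℝ)*(a:ℝ)*(b:ℝ)^2*(n:ℝ)
      + (-1/8:ℝ)*(a:ℝ)*(b:ℝ)^2*(n:ℝ)^2
      + (1/12:ℝ)*(a:ℝ)*(b:ℝ)^2*(n:ℝ)^3
      + (-1/12:ℝ)*(a:ℝ)^2*(n:ℝ)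
      + (-1/24:ℝ)*(a:ℝ)^2*(n:ℝ)^2
      + (1/4:ℝ)*(a:ℝ)^2*(n:ℝ)^3
      + (-1/8:ℝ)*(a:ℝ)^2*(n:ℝ)^4
      + (-1/24:ℝ)*(a:ℝ)^2*(b:ℝ)*(n:ℝ)
      + (3/8:ℝ)*(a:ℝ)^2*(b:ℝ)*(n:ℝ)^2
      + (-1/4:ℝ)*(a:ℝ)^2*(b:ℝ)*(n:ℝ)^3
      + (1/8:ℝ)*(a:ℝ)^2*(b:ℝ)^2*(n:ℝ)
      + (-1/8:ℝ)*(a:ℝ)^2*(b:ℝ)^2*(n:ℝ)^2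
      + (-1/36:ℝ)*(a:ℝ)^3*(n:ℝ)
      + (-1/6:ℝ)*(a:ℝ)^3*(n:ℝ)^2
      + (1/9:ℝ)*(a:ℝ)^3*(n:ℝ)^3
      + (-1/6:ℝ)*(a:ℝ)^3*(b:ℝ)*(n:ℝ)
      + (1/6:ℝ)*(a:ℝ)^3*(b:ℝ)*(n:ℝ)^2
      + (1/12:ℝ)*(a:ℝ)^4*(n:ℝ)
      + (-1/12:ℝ)*(a:ℝ)^4*(n:ℝ)^2
      + (-1/12:ℝ)*(a:ℝ)^4*(b:ℝ)*(n:ℝ)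
      + (1/12:ℝ)*(a:ℝ)^5*(n:ℝ) ) / (a^2*(a^2-1)/12) := by
  induction n with
  | zero => rw [Finset.sum_range_zero]; push_cast; ring
  | succ m ih => rw [Finset.sum_range_succ, ih]; push_cast; ring



lemma sum1 (s : ℕ) : ∑ t ∈ range s, ((t:ℝ)+1) = (s:ℝ)*(s+1)/2 := by
  induction s with
  | zero => simp
  | succ n ih => rw [Finset.sum_range_succ, ih]; push_cast; ring

lemma sum2 (s : ℕ) : ∑ t ∈ range s, ((t:ℝ)+1)^2 = (s:ℝ)*(s+1)*(2*s+1)/6 := by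
  induction s with
  | zero => simp
  | succ n ih => rw [Finset.sum_range_succ, ih]; push_cast; ring

lemma ite_sum (f : ℕ → ℝ) (x s : ℕ) (hx : x ≤ s) :
    ∑ i ∈ range s, (if x ≤ i then f i else 0)
      = ∑ i ∈ range s, f i - ∑ i ∈ range x, f i := by
  have h1 : ∑ i ∈ Finset.Ico 0 x, (if x ≤ i then f i else 0) = 0 := by
    apply Finset.sum_eq_zero; intro i hi
    rw [Finset.mem_Ico] at hi
    rw [if_neg (by omega)]
  have h2 : ∑ i ∈ Finset.Ico x s, (if x ≤ i then f i else 0) = ∑ i ∈ Finset.Ico x s, f i := by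
    apply Finset.sum_congr rfl; intro i hi
    rw [Finset.mem_Ico] at hi
    rw [if_pos hi.1]
  simp only [range_eq_Ico]
  rw [← Finset.sum_Ico_consecutive (fun i => if x ≤ i then f i else 0) (Nat.zero_le x) hx,
    h1, h2, ← Finset.sum_Ico_consecutive f (Nat.zero_le x) hx]
  ring

lemma hN (s : ℕ) : dfaB 1 s * (dfaB 1 s)ᵀ
    = !![(s:ℝ), (s:ℝ)*(s+1)/2; (s:ℝ)*(s+1)/2, (s:ℝ)*(s+1)*(2*s+1)/6] := by
  ext a b
  fin_cases a <;> fin_cases b <;>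
    simp [Matrix.mul_apply, dfaB, Matrix.transpose_apply]
  · rw [Fin.sum_univ_eq_sum_range (fun t => ((t:ℝ)+1)) s]; exact sum1 s
  · rw [Fin.sum_univ_eq_sum_range (fun t => ((t:ℝ)+1)) s]; exact sum1 s
  · rw [Fin.sum_univ_eq_sum_range (fun t => ((t:ℝ)+1)*((t:ℝ)+1)) s]
    have := sum2 s
    simp only [pow_two] at this
    exact this

lemma hQ (s : ℕ) (hs : 2 ≤ s) (i p : Fin s) :
    dfaQ 1 s i p
      = ((s:ℝ)*(s+1)*(2*s+1)/6 - (s:ℝ)*(s+1)/2*((i:ℝ)+1) - (s:ℝ)*(s+1)/2*((p:ℝ)+1)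
          + (s:ℝ)*((i:ℝ)+1)*((p:ℝ)+1)) / ((s:ℝ)^2*((s:ℝ)^2-1)/12) := by
  rw [dfaQ, hN s, Matrix.inv_def, Matrix.adjugate_fin_two, Matrix.det_fin_two_of]
  simp only [Ring.inverse_eq_inv']
  simp [Matrix.mul_apply, Fin.sum_univ_two, Matrix.smul_apply, dfaB,
    Matrix.transpose_apply, smul_eq_mul]
  push_cast
  ring

lemma T0 (s x : ℕ) (hx : x ≤ s) :
    ∑ i : Fin s, (if x ≤ (i:ℕ) then (1:ℝ) else 0) = (s:ℝ) - x := by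
  rw [Fin.sum_univ_eq_sum_range (fun i => if x ≤ i then (1:ℝ) else 0) s,
    ite_sum _ _ _ hx]
  simp

lemma T1 (s x : ℕ) (hx : x ≤ s) :
    ∑ i : Fin s, (if x ≤ (i:ℕ) then ((i:ℝ)+1) else 0)
      = ((s:ℝ)*(s+1) - (x:ℝ)*(x+1))/2 := by
  rw [Fin.sum_univ_eq_sum_range (fun i => if x ≤ i then ((i:ℝ)+1) else 0) s,
    ite_sum _ _ _ hx, sum1, sum1]
  ring


lemma hA (s : ℕ) (hs : 2 ≤ s) (k l : Fin s) (hkl : (k:ℕ) ≤ (l:ℕ)) :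
    dfaA 1 s k l
      = ((s:ℝ) - (l:ℝ))
        - ( (s:ℝ)*(s+1)*(2*s+1)/6 * ((s:ℝ)-(k:ℝ)) * ((s:ℝ)-(l:ℝ))
          - (s:ℝ)*(s+1)/2 * ( ((s:ℝ)*((s:ℝ)+1)-(k:ℝ)*((k:ℝ)+1))/2 * ((s:ℝ)-(l:ℝ))
              + ((s:ℝ)-(k:ℝ)) * ((s:ℝ)*((s:ℝ)+1)-(l:ℝ)*((l:ℝ)+1))/2 )
          + (s:ℝ) * (((s:ℝ)*((s:ℝ)+1)-(k:ℝ)*((k:ℝ)+1))/2)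
              * (((s:ℝ)*((s:ℝ)+1)-(l:ℝ)*((l:ℝ)+1))/2) )
          / ((s:ℝ)^2*((s:ℝ)^2-1)/12) := by
  have hkle : (k:ℕ) ≤ s := le_of_lt k.isLt
  have hlle : (l:ℕ) ≤ s := le_of_lt l.isLt
  have key : ∀ p : Fin s,
      (∑ i : Fin s, (dfaD s)ᵀ k i * ((1 - dfaQ 1 s) i p))
        = (if (k:ℕ) ≤ (p:ℕ) then (1:ℝ) else 0)
          - ( ((s:ℝ)*(s+1)*(2*s+1)/6 - (s:ℝ)*(s+1)/2*((p:ℝ)+1))/((s:ℝ)^2*((s:ℝ)^2-1)/12)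
                * ((s:ℝ)-(k:ℝ))
            + ((s:ℝ)*((p:ℝ)+1) - (s:ℝ)*(s+1)/2)/((s:ℝ)^2*((s:ℝ)^2-1)/12)
                * (((s:ℝ)*((s:ℝ)+1)-(k:ℝ)*((k:ℝ)+1))/2) ) := by
    intro p
    have step1 : ∀ i : Fin s, (dfaD s)ᵀ k i * ((1 - dfaQ 1 s) i p)
        = (if (k:ℕ) ≤ (i:ℕ) then (1:ℝ) else 0) * (if i = p then (1:ℝ) else 0)
          - ( ((s:ℝ)*(s+1)*(2*s+1)/6 - (s:ℝ)*(s+1)/2*((p:ℝ)+1))/((s:ℝ)^2*((s:ℝ)^2-1)/12)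
                * (if (k:ℕ) ≤ (i:ℕ) then (1:ℝ) else 0)
            + ((s:ℝ)*((p:ℝ)+1) - (s:ℝ)*(s+1)/2)/((s:ℝ)^2*((s:ℝ)^2-1)/12)
                * (if (k:ℕ) ≤ (i:ℕ) then ((i:ℝ)+1) else 0) ) := by
      intro i
      simp only [Matrix.transpose_apply, Matrix.sub_apply, Matrix.one_apply, dfaD]
      rw [hQ s hs i p]
      split_ifs <;> ring
    rw [Finset.sum_congr rfl (fun i _ => step1 i), Finset.sum_sub_distrib,
      Finset.sum_add_distrib, ← Finset.mul_sum, ← Finset.mul_sum, T0 s k hkle, T1 s k hkle]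
    congr 1
    rw [Finset.sum_eq_single p]
    · rw [if_pos rfl, mul_one]
    · intro b _ hb; rw [if_neg hb, mul_zero]
    · intro h; exact absurd (Finset.mem_univ p) h
  rw [dfaA]
  simp only [Matrix.mul_apply]
  rw [Finset.sum_congr rfl (fun p _ => by rw [key p])]
  have step2 : ∀ p : Fin s,
      ((if (k:ℕ) ≤ (p:ℕ) then (1:ℝ) else 0)
          - ( ((s:ℝ)*(s+1)*(2*s+1)/6 - (s:ℝ)*(s+1)/2*((p:ℝ)+1))/((s:ℝ)^2*((s:ℝ)^2-1)/12)
                * ((s:ℝ)-(k:ℝ))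
            + ((s:ℝ)*((p:ℝ)+1) - (s:ℝ)*(s+1)/2)/((s:ℝ)^2*((s:ℝ)^2-1)/12)
                * (((s:ℝ)*((s:ℝ)+1)-(k:ℝ)*((k:ℝ)+1))/2) )) * dfaD s p l
        = (if (l:ℕ) ≤ (p:ℕ) then (1:ℝ) else 0)
          - ( ( ((s:ℝ)*(s+1)*(2*s+1)/6 * ((s:ℝ)-(k:ℝ))
                - (s:ℝ)*(s+1)/2 * (((s:ℝ)*((s:ℝ)+1)-(k:ℝ)*((k:ℝ)+1))/2) )
                  /((s:ℝ)^2*((s:ℝ)^2-1)/12) )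
              * (if (l:ℕ) ≤ (p:ℕ) then (1:ℝ) else 0)
          + ( ( ((s:ℝ) * (((s:ℝ)*((s:ℝ)+1)-(k:ℝ)*((k:ℝ)+1))/2)
                - (s:ℝ)*(s+1)/2 * ((s:ℝ)-(k:ℝ)) )
                  /((s:ℝ)^2*((s:ℝ)^2-1)/12) )
              * (if (l:ℕ) ≤ (p:ℕ) then ((p:ℝ)+1) else 0) ) ) := by
    intro p
    simp only [dfaD]
    by_cases h2 : (l:ℕ) ≤ (p:ℕ)
    · rw [if_pos (le_trans hkl h2)]
      simp only [if_pos h2]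
      ring
    · simp only [if_neg h2]
      split_ifs <;> ring
  rw [Finset.sum_congr rfl (fun p _ => step2 p), Finset.sum_sub_distrib,
    Finset.sum_add_distrib, ← Finset.mul_sum, ← Finset.mul_sum,
    T0 s l hlle, T1 s l hlle]
  ring

set_option maxHeartbeats 2000000 in
theorem dfa1_weight_function (s j : ℕ) (hs : 2 ≤ s) (hj : j ≤ s - 1) :
    dfaG 1 s j
      = (((j:ℝ) - s - 1) * ((j:ℝ) - s) * ((j:ℝ) - s + 1)
          * (3 * (j:ℝ)^2 + 9 * (j:ℝ) * s - 2 * (s:ℝ)^2 + 8))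
        / (30 * s * ((s:ℝ)^2 - 1)) := by
  have hjs : j < s := by omega
  have step : ∀ k : Fin s,
      (∑ l : Fin s, if (l:ℕ) = (k:ℕ) + j then dfaA 1 s k l else 0)
        = (if (k:ℕ) + j < s then
            ((s:ℝ) - ((k:ℝ)+(j:ℝ)))
      - ( (s:ℝ)*((s:ℝ)+1)*(2*(s:ℝ)+1)/6*((s:ℝ)-(k:ℝ))*((s:ℝ)-((k:ℝ)+(j:ℝ)))
        - (s:ℝ)*((s:ℝ)+1)/2*( ((s:ℝ)*((s:ℝ)+1)-(k:ℝ)*((k:ℝ)+1))/2*((s:ℝ)-((k:ℝ)+(j:ℝ)))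
            + ((s:ℝ)-(k:ℝ))*(((s:ℝ)*((s:ℝ)+1)-((k:ℝ)+(j:ℝ))*(((k:ℝ)+(j:ℝ))+1))/2) )
        + (s:ℝ)*(((s:ℝ)*((s:ℝ)+1)-(k:ℝ)*((k:ℝ)+1))/2)*(((s:ℝ)*((s:ℝ)+1)-((k:ℝ)+(j:ℝ))*(((k:ℝ)+(j:ℝ))+1))/2) )
        / ((s:ℝ)^2*((s:ℝ)^2-1)/12)
          else 0) := by
    intro k
    by_cases h : (k:ℕ) + j < s
    · rw [if_pos h, Finset.sum_eq_single (⟨(k:ℕ)+j, h⟩ : Fin s)]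
      · rw [if_pos rfl, hA s hs k ⟨(k:ℕ)+j, h⟩ (Nat.le_add_right _ _)]
        push_cast
        ring
      · intro b _ hb
        exact if_neg (fun hc => hb (Fin.ext hc))
      · intro hcon
        exact absurd (Finset.mem_univ _) hcon
    · rw [if_neg h]
      refine Finset.sum_eq_zero (fun l _ => if_neg ?_)
      have := l.isLt
      omega
  rw [dfaG, Finset.sum_congr rfl (fun k _ => step k),
    Fin.sum_univ_eq_sum_range (fun k => if k + j < s then
      ((s:ℝ) - ((k:ℝ)+(j:ℝ)))
      - ( (s:ℝ)*((s:ℝ)+1)*(2*(s:ℝ)+1)/6*((s:ℝ)-(k:ℝ))*((s:ℝ)-((k:ℝ)+(j:ℝ)))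
        - (s:ℝ)*((s:ℝ)+1)/2*( ((s:ℝ)*((s:ℝ)+1)-(k:ℝ)*((k:ℝ)+1))/2*((s:ℝ)-((k:ℝ)+(j:ℝ)))
            + ((s:ℝ)-(k:ℝ))*(((s:ℝ)*((s:ℝ)+1)-((k:ℝ)+(j:ℝ))*(((k:ℝ)+(j:ℝ))+1))/2) )
        + (s:ℝ)*(((s:ℝ)*((s:ℝ)+1)-(k:ℝ)*((k:ℝ)+1))/2)*(((s:ℝ)*((s:ℝ)+1)-((k:ℝ)+(j:ℝ))*(((k:ℝ)+(j:ℝ))+1))/2) )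
        / ((s:ℝ)^2*((s:ℝ)^2-1)/12)
      else 0) s]
  have hfil : (∑ k ∈ range s, if k + j < s then
      ((s:ℝ) - ((k:ℝ)+(j:ℝ)))
      - ( (s:ℝ)*((s:ℝ)+1)*(2*(s:ℝ)+1)/6*((s:ℝ)-(k:ℝ))*((s:ℝ)-((k:ℝ)+(j:ℝ)))
        - (s:ℝ)*((s:ℝ)+1)/2*( ((s:ℝ)*((s:ℝ)+1)-(k:ℝ)*((k:ℝ)+1))/2*((s:ℝ)-((k:ℝ)+(j:ℝ)))
            + ((s:ℝ)-(k:ℝ))*(((s:ℝ)*((s:ℝ)+1)-((k:ℝ)+(j:ℝ))*(((k:ℝ)+(j:ℝ))+1))/2) )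
        + (s:ℝ)*(((s:ℝ)*((s:ℝ)+1)-(k:ℝ)*((k:ℝ)+1))/2)*(((s:ℝ)*((s:ℝ)+1)-((k:ℝ)+(j:ℝ))*(((k:ℝ)+(j:ℝ))+1))/2) )
        / ((s:ℝ)^2*((s:ℝ)^2-1)/12)
      else 0)
      = ∑ k ∈ range (s - j), (((s:ℝ) - ((k:ℝ)+(j:ℝ)))
      - ( (s:ℝ)*((s:ℝ)+1)*(2*(s:ℝ)+1)/6*((s:ℝ)-(k:ℝ))*((s:ℝ)-((k:ℝ)+(j:ℝ)))
        - (s:ℝ)*((s:ℝ)+1)/2*( ((s:ℝ)*((s:ℝ)+1)-(k:ℝ)*((k:ℝ)+1))/2*((s:ℝ)-((k:ℝ)+(j:ℝ)))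
            + ((s:ℝ)-(k:ℝ))*(((s:ℝ)*((s:ℝ)+1)-((k:ℝ)+(j:ℝ))*(((k:ℝ)+(j:ℝ))+1))/2) )
        + (s:ℝ)*(((s:ℝ)*((s:ℝ)+1)-(k:ℝ)*((k:ℝ)+1))/2)*(((s:ℝ)*((s:ℝ)+1)-((k:ℝ)+(j:ℝ))*(((k:ℝ)+(j:ℝ))+1))/2) )
        / ((s:ℝ)^2*((s:ℝ)^2-1)/12)) := by
    rw [← Finset.sum_filter]
    apply Finset.sum_congr
    · ext a
      simp only [Finset.mem_filter, Finset.mem_range]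
      omega
    · intros; rfl
  rw [hfil, sumW (s:ℝ) (j:ℝ) (s - j), Nat.cast_sub (le_of_lt hjs)]
  have h2 : (2:ℝ) ≤ (s:ℝ) := by exact_mod_cast hs
  have h0 : (s:ℝ) ≠ 0 := by nlinarith
  have hm : (s:ℝ) - 1 ≠ 0 := by nlinarith
  have hp : (s:ℝ) + 1 ≠ 0 := by nlinarith
  have hsq : (s:ℝ)^2 - 1 ≠ 0 := by
    have h : (s:ℝ)^2 - 1 = ((s:ℝ) - 1) * ((s:ℝ) + 1) := by ring
    rw [h]
    exact mul_ne_zero hm hp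
  field_simp
  ring
end

section
/- Let X(t) = T(t) + Z(t) where T is a deterministic polynomial of degree q ≤ m-1 and Z is a mean-zero process. Then the DFA-m fluctuation function of X equals that of Z in expectation: E F_t^2(s)[X] = (1/s) Σ_{k,j=1}^s a_{kj} γ_Z(t+k, t+j), i.e. the polynomial trend contributes nothing. In particular Σ_{k,j} a_{kj} T(t+k)T(t+j) = 0 and the cross terms have zero expectation. -/
open MeasureTheory Finset Filter Matrix

/-! ### Auxiliary: polynomial functions of bounded degree -/

def DfaIsPoly (d : ℕ) (f : ℕ → ℝ) : Prop :=
  ∃ c : ℕ → ℝ, ∀ n : ℕ, f n = ∑ i ∈ Finset.range (d+1), c i * (n:ℝ)^i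

lemma DfaIsPoly.congr {d : ℕ} {f g : ℕ → ℝ} (h : DfaIsPoly d f) (hfg : ∀ n, f n = g n) :
    DfaIsPoly d g := by
  obtain ⟨c, hc⟩ := h
  exact ⟨c, fun n => (hfg n) ▸ hc n⟩

lemma DfaIsPoly.mono {d e : ℕ} {f : ℕ → ℝ} (h : DfaIsPoly d f) (hde : d ≤ e) :
    DfaIsPoly e f := by
  obtain ⟨c, hc⟩ := h
  refine ⟨fun i => if i < d + 1 then c i else 0, fun n => ?_⟩
  rw [hc n, ← Finset.sum_subset (Finset.range_subset_range.2 (by omega : d + 1 ≤ e + 1))]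
  · refine Finset.sum_congr rfl fun i hi => ?_
    simp [Finset.mem_range.1 hi]
  · intro i _ hi
    simp only [Finset.mem_range] at hi
    simp [show ¬ i < d + 1 by omega]

lemma DfaIsPoly.add {d : ℕ} {f g : ℕ → ℝ} (hf : DfaIsPoly d f) (hg : DfaIsPoly d g) :
    DfaIsPoly d (fun n => f n + g n) := by
  obtain ⟨c, hc⟩ := hf
  obtain ⟨c', hc'⟩ := hg
  refine ⟨fun i => c i + c' i, fun n => ?_⟩
  show f n + g n = _
  simp only [hc n, hc' n, ← Finset.sum_add_distrib, add_mul]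

lemma DfaIsPoly.smul {d : ℕ} {f : ℕ → ℝ} (a : ℝ) (hf : DfaIsPoly d f) :
    DfaIsPoly d (fun n => a * f n) := by
  obtain ⟨c, hc⟩ := hf
  refine ⟨fun i => a * c i, fun n => ?_⟩
  show a * f n = _
  rw [hc n, Finset.mul_sum]
  exact Finset.sum_congr rfl fun i _ => by ring

lemma dfaIsPoly_zero (d : ℕ) : DfaIsPoly d (fun _ => 0) :=
  ⟨fun _ => 0, fun n => by simp⟩

lemma dfaIsPoly_sum {ι : Type*} (F : Finset ι) {d : ℕ} {f : ι → ℕ → ℝ}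
    (h : ∀ i ∈ F, DfaIsPoly d (f i)) :
    DfaIsPoly d (fun n => ∑ i ∈ F, f i n) := by
  classical
  induction F using Finset.induction_on with
  | empty => simpa using dfaIsPoly_zero d
  | @insert a F' ha ih =>
    have h1 := h a (Finset.mem_insert_self a F')
    have h2 := ih fun i hi => h i (Finset.mem_insert_of_mem hi)
    exact (h1.add h2).congr fun n => by rw [Finset.sum_insert ha]

lemma dfaIsPoly_pow {j d : ℕ} (hj : j ≤ d) : DfaIsPoly d (fun n => (n:ℝ)^j) := by
  classical
  refine ⟨fun i => if i = j then 1 else 0, fun n => ?_⟩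
  show (n:ℝ)^j = _
  rw [Finset.sum_eq_single j]
  · simp
  · intro i _ hij; simp [hij]
  · intro h; exact absurd (Finset.mem_range.2 (by omega)) h

lemma dfaIsPoly_shift_pow (a : ℝ) (p : ℕ) : DfaIsPoly p (fun n => ((n:ℝ) + a)^p) := by
  refine ⟨fun k => a^(p-k) * (p.choose k), fun n => ?_⟩
  show ((n:ℝ) + a)^p = _
  rw [add_pow]
  exact Finset.sum_congr rfl fun k _ => by ring

lemma dfaIsPoly_sum_pow (p : ℕ) :
    DfaIsPoly (p+1) (fun n => ∑ u ∈ Finset.range n, (u:ℝ)^p) := by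
  induction p using Nat.strong_induction_on with
  | _ p ih =>
    -- key identity
    have key : ∀ n : ℕ, ((p:ℝ)+1) * (∑ u ∈ Finset.range n, (u:ℝ)^p)
        = (n:ℝ)^(p+1) - ∑ k ∈ Finset.range p,
            ((p+1).choose k : ℝ) * ∑ u ∈ Finset.range n, (u:ℝ)^k := by
      intro n
      have tel : ∑ u ∈ Finset.range n, (((u:ℝ)+1)^(p+1) - (u:ℝ)^(p+1)) = (n:ℝ)^(p+1) := by
        have h := Finset.sum_range_sub (fun u : ℕ => (u:ℝ)^(p+1)) n
        push_cast at h
        simpa using h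
      have expand : ∀ u : ℕ, ((u:ℝ)+1)^(p+1) - (u:ℝ)^(p+1)
          = ∑ k ∈ Finset.range (p+1), ((p+1).choose k : ℝ) * (u:ℝ)^k := by
        intro u
        rw [add_pow (u:ℝ) 1 (p+1), Finset.sum_range_succ]
        simp only [one_pow, mul_one, Nat.choose_self, Nat.cast_one, Nat.sub_self, pow_zero]
        rw [add_sub_cancel_right]
        exact Finset.sum_congr rfl fun k _ => by ring
      have hmain : (n:ℝ)^(p+1) = ∑ k ∈ Finset.range (p+1),
          ((p+1).choose k : ℝ) * ∑ u ∈ Finset.range n, (u:ℝ)^k := by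
        rw [← tel, Finset.sum_congr rfl fun u _ => expand u, Finset.sum_comm]
        exact Finset.sum_congr rfl fun k _ => by rw [Finset.mul_sum]
      rw [hmain, Finset.sum_range_succ]
      have hch : (((p+1).choose p : ℕ) : ℝ) = (p:ℝ) + 1 := by
        rw [Nat.choose_succ_self_right]; push_cast; ring
      rw [hch]; ring
    -- now build
    have h1 : DfaIsPoly (p+1) (fun n => (n:ℝ)^(p+1)) := dfaIsPoly_pow le_rfl
    have h2 : DfaIsPoly (p+1) (fun n => ∑ k ∈ Finset.range p,
        (-(((p+1).choose k : ℕ) : ℝ)) * ∑ u ∈ Finset.range n, (u:ℝ)^k) := by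
      refine dfaIsPoly_sum (Finset.range p) fun k hk => ?_
      have hk' : k < p := Finset.mem_range.1 hk
      exact ((ih k hk').mono (by omega)).smul _
    have h4 := (h1.add h2).smul (1/((p:ℝ)+1))
    refine h4.congr fun n => ?_
    have hp1 : (p:ℝ) + 1 ≠ 0 := by positivity
    have hkey := key n
    show (1/((p:ℝ)+1)) * ((n:ℝ)^(p+1) + ∑ k ∈ Finset.range p,
        (-(((p+1).choose k : ℕ) : ℝ)) * ∑ u ∈ Finset.range n, (u:ℝ)^k)
      = ∑ u ∈ Finset.range n, (u:ℝ)^p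
    have hsum : ∑ k ∈ Finset.range p,
        (-(((p+1).choose k : ℕ) : ℝ)) * ∑ u ∈ Finset.range n, (u:ℝ)^k
        = -∑ k ∈ Finset.range p,
            (((p+1).choose k : ℕ) : ℝ) * ∑ u ∈ Finset.range n, (u:ℝ)^k := by
      rw [← Finset.sum_neg_distrib]
      exact Finset.sum_congr rfl fun k _ => by ring
    rw [hsum]
    field_simp
    linarith [hkey]

lemma dfaIsPoly_partial_sum {d : ℕ} {f : ℕ → ℝ} (hf : DfaIsPoly d f) :
    DfaIsPoly (d+1) (fun n => ∑ u ∈ Finset.range n, f u) := by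
  obtain ⟨c, hc⟩ := hf
  have hmain : DfaIsPoly (d+1) (fun n => ∑ i ∈ Finset.range (d+1),
      c i * ∑ u ∈ Finset.range n, (u:ℝ)^i) := by
    refine dfaIsPoly_sum (Finset.range (d+1)) fun i hi => ?_
    have hi' : i < d + 1 := Finset.mem_range.1 hi
    exact ((dfaIsPoly_sum_pow i).mono (by omega)).smul _
  refine hmain.congr fun n => ?_
  show ∑ i ∈ Finset.range (d+1), c i * ∑ u ∈ Finset.range n, (u:ℝ)^i
      = ∑ u ∈ Finset.range n, f u
  rw [show (∑ u ∈ Finset.range n, f u)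
      = ∑ u ∈ Finset.range n, ∑ i ∈ Finset.range (d+1), c i * (u:ℝ)^i from
    Finset.sum_congr rfl fun u _ => hc u, Finset.sum_comm]
  exact Finset.sum_congr rfl fun i _ => by rw [Finset.mul_sum]

/-! ### Invertibility of B Bᵀ -/

lemma dfaBBT_isUnit (m s : ℕ) (hs : m + 1 ≤ s) : IsUnit (dfaB m s * (dfaB m s)ᵀ) := by
  rw [← Matrix.mulVec_injective_iff_isUnit]
  have hker : ∀ x : Fin (m+1) → ℝ, (dfaB m s * (dfaB m s)ᵀ) *ᵥ x = 0 → x = 0 := by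
    intro x hx
    -- first: Bᵀ *ᵥ x = 0
    have hdot : ((dfaB m s)ᵀ *ᵥ x) ⬝ᵥ ((dfaB m s)ᵀ *ᵥ x) = 0 := by
      have h0 : x ⬝ᵥ ((dfaB m s * (dfaB m s)ᵀ) *ᵥ x) = 0 := by rw [hx]; simp
      rwa [← Matrix.mulVec_mulVec, Matrix.dotProduct_mulVec, ← Matrix.mulVec_transpose] at h0
    have hBt : (dfaB m s)ᵀ *ᵥ x = 0 := by
      funext i
      have hnn : ∀ j ∈ Finset.univ (α := Fin s),
          0 ≤ ((dfaB m s)ᵀ *ᵥ x) j * ((dfaB m s)ᵀ *ᵥ x) j := fun j _ => mul_self_nonneg _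
      have h1 := (Finset.sum_eq_zero_iff_of_nonneg hnn).1 hdot i (Finset.mem_univ i)
      have h2 := mul_self_eq_zero.1 h1
      simpa using h2
    -- vandermonde
    set v : Fin (m+1) → ℝ := fun i => ((i:ℕ):ℝ) + 1 with hv
    have hVdet : (Matrix.vandermonde v).det ≠ 0 := by
      rw [Matrix.det_vandermonde]
      refine Finset.prod_ne_zero_iff.2 fun i _ =>
        Finset.prod_ne_zero_iff.2 fun j hj => sub_ne_zero.2 ?_
      have hij : i < j := Finset.mem_Ioi.1 hj
      have hij' : (i:ℕ) < (j:ℕ) := hij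
      have hr : ((i:ℕ):ℝ) < ((j:ℕ):ℝ) := by exact_mod_cast hij'
      simp only [hv]
      exact ne_of_gt (by linarith)
    have hVx : (Matrix.vandermonde v) *ᵥ x = 0 := by
      funext j
      have h1 : ((dfaB m s)ᵀ *ᵥ x) (Fin.castLE hs j) = 0 := by rw [hBt]; rfl
      simp only [Matrix.mulVec, dotProduct, Matrix.transpose_apply, dfaB,
        Matrix.vandermonde_apply, Pi.zero_apply] at h1 ⊢
      rw [← h1]
      refine Finset.sum_congr rfl fun i _ => ?_
      congr 1
      simp only [hv, Fin.coe_castLE]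
      push_cast
      ring
    have hVinj : Function.Injective ((Matrix.vandermonde v).mulVec) :=
      Matrix.mulVec_injective_iff_isUnit.2
        ((Matrix.isUnit_iff_isUnit_det _).2 hVdet.isUnit)
    have hfin : (Matrix.vandermonde v) *ᵥ x = (Matrix.vandermonde v) *ᵥ 0 := by
      rw [hVx, Matrix.mulVec_zero]
    exact hVinj hfin
  intro x y hxy
  have h0 : (dfaB m s * (dfaB m s)ᵀ) *ᵥ (x - y) = 0 := by
    rw [Matrix.mulVec_sub, hxy, sub_self]
  exact sub_eq_zero.1 (hker _ h0)

lemma dfaQ_fix (m s : ℕ) (hs : m + 1 ≤ s) (c : Fin (m+1) → ℝ) :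
    dfaQ m s *ᵥ ((dfaB m s)ᵀ *ᵥ c) = (dfaB m s)ᵀ *ᵥ c := by
  have hu := dfaBBT_isUnit m s hs
  have hinv : (dfaB m s * (dfaB m s)ᵀ)⁻¹ * (dfaB m s * (dfaB m s)ᵀ) = 1 :=
    Matrix.nonsing_inv_mul _ ((Matrix.isUnit_iff_isUnit_det _).1 hu)
  have hQB : dfaQ m s * (dfaB m s)ᵀ = (dfaB m s)ᵀ := by
    rw [dfaQ,
      Matrix.mul_assoc ((dfaB m s)ᵀ * (dfaB m s * (dfaB m s)ᵀ)⁻¹) (dfaB m s) ((dfaB m s)ᵀ),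
      Matrix.mul_assoc ((dfaB m s)ᵀ) ((dfaB m s * (dfaB m s)ᵀ)⁻¹) (dfaB m s * (dfaB m s)ᵀ),
      hinv, Matrix.mul_one]
  rw [Matrix.mulVec_mulVec, hQB]

/-! ### The trend is annihilated by A -/

lemma dfaA_annihilates (m s q : ℕ) (hq : q + 1 ≤ m) (hs : m + 1 ≤ s)
    (β : ℕ → ℝ) (T : ℕ → ℝ) (hT : ∀ t : ℕ, T t = ∑ i ∈ Finset.range (q + 1), β i * (t:ℝ)^i)
    (t : ℕ) :
    dfaA m s *ᵥ (fun k : Fin s => T (t + 1 + (k:ℕ))) = 0 := by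
  set v : Fin s → ℝ := fun k => T (t + 1 + (k:ℕ)) with hvdef
  -- T (t+1+u) is polynomial in u of degree ≤ q
  have hTpoly : DfaIsPoly q (fun u => T (t + 1 + u)) := by
    have hp : DfaIsPoly q (fun u => ∑ i ∈ Finset.range (q+1),
        β i * ((u:ℝ) + ((t:ℝ)+1))^i) := by
      refine dfaIsPoly_sum (Finset.range (q+1)) fun i hi => ?_
      have hi' : i < q + 1 := Finset.mem_range.1 hi
      exact ((dfaIsPoly_shift_pow ((t:ℝ)+1) i).mono (by omega)).smul _
    refine hp.congr fun u => ?_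
    show ∑ i ∈ Finset.range (q+1), β i * ((u:ℝ) + ((t:ℝ)+1))^i = T (t + 1 + u)
    rw [hT]
    refine Finset.sum_congr rfl fun i _ => ?_
    congr 1
    push_cast
    ring
  -- partial sums form a polynomial of degree ≤ m
  have hg : DfaIsPoly m (fun n => ∑ u ∈ Finset.range n, T (t + 1 + u)) :=
    (dfaIsPoly_partial_sum hTpoly).mono (by omega)
  obtain ⟨c, hc⟩ := hg
  have hc' : ∀ n : ℕ, ∑ u ∈ Finset.range n, T (t + 1 + u)
      = ∑ i ∈ Finset.range (m+1), c i * (n:ℝ)^i := fun n => hc n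
  set cc : Fin (m+1) → ℝ := fun i => c (i:ℕ) with hcc
  -- D *ᵥ v = Bᵀ *ᵥ cc
  have hDv : dfaD s *ᵥ v = (dfaB m s)ᵀ *ᵥ cc := by
    funext k
    have lhs_eq : (dfaD s *ᵥ v) k = ∑ u ∈ Finset.range ((k:ℕ)+1), T (t + 1 + u) := by
      simp only [Matrix.mulVec, dotProduct, dfaD]
      have h1 : ∀ j : Fin s, (if (j:ℕ) ≤ (k:ℕ) then (1:ℝ) else 0) * v j
          = if (j:ℕ) ≤ (k:ℕ) then T (t + 1 + (j:ℕ)) else 0 := by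
        intro j; split <;> simp [hvdef]
      rw [Finset.sum_congr rfl fun j _ => h1 j]
      rw [Fin.sum_univ_eq_sum_range (fun u => if u ≤ (k:ℕ) then T (t+1+u) else 0) s]
      rw [← Finset.sum_filter]
      have hfil : Finset.filter (fun u => u ≤ (k:ℕ)) (Finset.range s)
          = Finset.range ((k:ℕ)+1) := by
        ext u
        simp only [Finset.mem_filter, Finset.mem_range]
        have := k.isLt
        omega
      rw [hfil]
    rw [lhs_eq, hc']
    simp only [Matrix.mulVec, dotProduct, Matrix.transpose_apply, dfaB, hcc]
    rw [Fin.sum_univ_eq_sum_range (fun i => (((k:ℕ)+1 : ℕ):ℝ)^i * c i) (m+1)]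
    refine Finset.sum_congr rfl fun i _ => ?_
    push_cast
    ring
  -- conclude
  rw [dfaA, ← Matrix.mulVec_mulVec, ← Matrix.mulVec_mulVec, hDv,
    Matrix.sub_mulVec, Matrix.one_mulVec, dfaQ_fix m s hs cc, sub_self,
    Matrix.mulVec_zero]

theorem dfa_polynomial_trend_invariance {Ω : Type*} [MeasurableSpace Ω] (μ : Measure Ω)
    [IsProbabilityMeasure μ] (m s q : ℕ) (hq : q + 1 ≤ m) (hs : m + 1 ≤ s)
    (β : ℕ → ℝ) (Z : ℕ → Ω → ℝ) (γZ : ℕ → ℕ → ℝ)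
    (hZint : ∀ t, Integrable (Z t) μ)
    (hmean : ∀ t, ∫ ω, Z t ω ∂μ = 0)
    (hint : ∀ t u, Integrable (fun ω => Z t ω * Z u ω) μ)
    (hcov : ∀ t u, ∫ ω, Z t ω * Z u ω ∂μ = γZ t u)
    (T : ℕ → ℝ) (hT : ∀ t : ℕ, T t = ∑ i ∈ Finset.range (q + 1), β i * (t:ℝ)^i)
    (X : ℕ → Ω → ℝ) (hX : ∀ t ω, X t ω = T t + Z t ω) (t : ℕ) :
    (∫ ω, (1/(s:ℝ)) * ∑ k : Fin s, ∑ j : Fin s,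
        dfaA m s k j * X (t + 1 + (k:ℕ)) ω * X (t + 1 + (j:ℕ)) ω ∂μ
      = (1/(s:ℝ)) * ∑ k : Fin s, ∑ j : Fin s,
          dfaA m s k j * γZ (t + 1 + (k:ℕ)) (t + 1 + (j:ℕ)))
    ∧ (∑ k : Fin s, ∑ j : Fin s,
        dfaA m s k j * T (t + 1 + (k:ℕ)) * T (t + 1 + (j:ℕ)) = 0)
    ∧ (∫ ω, ∑ k : Fin s, ∑ j : Fin s,
        dfaA m s k j * T (t + 1 + (k:ℕ)) * Z (t + 1 + (j:ℕ)) ω ∂μ = 0) := by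
  have hann := dfaA_annihilates m s q hq hs β T hT t
  have hrow : ∀ k : Fin s,
      ∑ j : Fin s, dfaA m s k j * T (t + 1 + (j:ℕ)) = 0 := by
    intro k
    have h := congrFun hann k
    simpa [Matrix.mulVec, dotProduct] using h
  -- Part 2
  have part2 : ∑ k : Fin s, ∑ j : Fin s,
      dfaA m s k j * T (t + 1 + (k:ℕ)) * T (t + 1 + (j:ℕ)) = 0 := by
    calc ∑ k : Fin s, ∑ j : Fin s,
          dfaA m s k j * T (t + 1 + (k:ℕ)) * T (t + 1 + (j:ℕ))
        = ∑ k : Fin s, T (t + 1 + (k:ℕ))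
            * ∑ j : Fin s, dfaA m s k j * T (t + 1 + (j:ℕ)) := by
          refine Finset.sum_congr rfl fun k _ => ?_
          rw [Finset.mul_sum]
          exact Finset.sum_congr rfl fun j _ => by ring
      _ = 0 := by simp [hrow]
  refine ⟨?_, part2, ?_⟩
  · -- Part 1
    have hterm_int : ∀ (k j : Fin s), Integrable (fun ω =>
        dfaA m s k j * X (t + 1 + (k:ℕ)) ω * X (t + 1 + (j:ℕ)) ω) μ := by
      intro k j
      have heq : (fun ω => dfaA m s k j * X (t + 1 + (k:ℕ)) ω * X (t + 1 + (j:ℕ)) ω)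
          = fun ω => (dfaA m s k j * T (t + 1 + (k:ℕ)) * T (t + 1 + (j:ℕ)))
            + ((dfaA m s k j * T (t + 1 + (k:ℕ))) * Z (t + 1 + (j:ℕ)) ω
            + ((dfaA m s k j * T (t + 1 + (j:ℕ))) * Z (t + 1 + (k:ℕ)) ω
            + dfaA m s k j * (Z (t + 1 + (k:ℕ)) ω * Z (t + 1 + (j:ℕ)) ω))) := by
        funext ω; rw [hX, hX]; ring
      rw [heq]
      exact (integrable_const _).add (((hZint _).const_mul _).add
        (((hZint _).const_mul _).add ((hint _ _).const_mul _)))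
    have hterm_val : ∀ (k j : Fin s), ∫ ω,
        dfaA m s k j * X (t + 1 + (k:ℕ)) ω * X (t + 1 + (j:ℕ)) ω ∂μ
        = dfaA m s k j * T (t + 1 + (k:ℕ)) * T (t + 1 + (j:ℕ))
          + dfaA m s k j * γZ (t + 1 + (k:ℕ)) (t + 1 + (j:ℕ)) := by
      intro k j
      obtain ⟨c0, c1, c2, c3, hc0, hc1, hc2, hc3⟩ :
          ∃ c0 c1 c2 c3 : ℝ, c0 = dfaA m s k j * T (t + 1 + (k:ℕ)) * T (t + 1 + (j:ℕ))
            ∧ c1 = dfaA m s k j * T (t + 1 + (k:ℕ))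
            ∧ c2 = dfaA m s k j * T (t + 1 + (j:ℕ))
            ∧ c3 = dfaA m s k j := ⟨_, _, _, _, rfl, rfl, rfl, rfl⟩
      have heq : (fun ω => dfaA m s k j * X (t + 1 + (k:ℕ)) ω * X (t + 1 + (j:ℕ)) ω)
          = fun ω => c0 + (c1 * Z (t + 1 + (j:ℕ)) ω + c2 * Z (t + 1 + (k:ℕ)) ω
            + c3 * (Z (t + 1 + (k:ℕ)) ω * Z (t + 1 + (j:ℕ)) ω)) := by
        funext ω; rw [hX, hX, hc0, hc1, hc2, hc3]; ring
      have I1 : Integrable (fun ω => c1 * Z (t + 1 + (j:ℕ)) ω) μ := (hZint _).const_mul _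
      have I2 : Integrable (fun ω => c2 * Z (t + 1 + (k:ℕ)) ω) μ := (hZint _).const_mul _
      have I3 : Integrable (fun ω =>
          c3 * (Z (t + 1 + (k:ℕ)) ω * Z (t + 1 + (j:ℕ)) ω)) μ := (hint _ _).const_mul _
      have I12 : Integrable (fun ω => c1 * Z (t + 1 + (j:ℕ)) ω
          + c2 * Z (t + 1 + (k:ℕ)) ω) μ := I1.add I2
      have I123 : Integrable (fun ω => c1 * Z (t + 1 + (j:ℕ)) ω
          + c2 * Z (t + 1 + (k:ℕ)) ω
          + c3 * (Z (t + 1 + (k:ℕ)) ω * Z (t + 1 + (j:ℕ)) ω)) μ := I12.add I3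
      rw [heq, integral_add (integrable_const _) I123, integral_add I12 I3,
        integral_add I1 I2, integral_const_mul c1, integral_const_mul c2,
        integral_const_mul c3, hmean, hmean, hcov, integral_const]
      rw [hc0, hc3]
      simp
    rw [integral_const_mul]
    congr 1
    have step1 : ∫ ω, (∑ k : Fin s, ∑ j : Fin s,
        dfaA m s k j * X (t + 1 + (k:ℕ)) ω * X (t + 1 + (j:ℕ)) ω) ∂μ
        = ∑ k : Fin s, ∑ j : Fin s,
          (dfaA m s k j * T (t + 1 + (k:ℕ)) * T (t + 1 + (j:ℕ))
            + dfaA m s k j * γZ (t + 1 + (k:ℕ)) (t + 1 + (j:ℕ))) := by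
      rw [integral_finset_sum _ (fun k _ => integrable_finset_sum _
        (fun j _ => hterm_int k j))]
      refine Finset.sum_congr rfl fun k _ => ?_
      rw [integral_finset_sum _ (fun j _ => hterm_int k j)]
      exact Finset.sum_congr rfl fun j _ => hterm_val k j
    rw [step1]
    simp only [Finset.sum_add_distrib]
    rw [part2, zero_add]
  · -- Part 3
    have hint3 : ∀ (k j : Fin s), Integrable (fun ω =>
        dfaA m s k j * T (t + 1 + (k:ℕ)) * Z (t + 1 + (j:ℕ)) ω) μ :=
      fun k j => (hZint _).const_mul _
    rw [integral_finset_sum _ (fun k _ => integrable_finset_sum _ (fun j _ => hint3 k j))]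
    refine Finset.sum_eq_zero fun k _ => ?_
    rw [integral_finset_sum _ (fun j _ => hint3 k j)]
    refine Finset.sum_eq_zero fun j _ => ?_
    rw [integral_const_mul, hmean, mul_zero]
end
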